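/- Let n ≥ 1, L > 0, μ ≤ 0, and let f : ℝⁿ → ℝ belong to F_{μ,L}. Assume the set X⋆ of global minimizers of f is nonempty, with minimum value f⋆, and that f has quadratic functional growth with constant μ_q > −μL/(L − μ) on a set X ⊆ ℝⁿ. Then for every x ∈ X and every x⋆ ∈ X⋆ with ‖x − x⋆‖ = d_{X⋆}(x), one has ⟨∇f(x), x − x⋆⟩ ≥ μ_g ‖x − x⋆‖², where μ_g = (μ_q/2)(1 − μ/L) + μ/2; that is, f has quadratic gradient growth with constant μ_g on X. -/

import Mathlib

open Set
open scoped RealInnerProductSpace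

section helpers

variable {E : Type*} [NormedAddCommGroup E] [InnerProductSpace ℝ E] [CompleteSpace E]

lemma first_order_aux {g : E → ℝ} {G : E →L[ℝ] ℝ} {u : E}
    (hg : ConvexOn ℝ univ g) (hG : HasFDerivAt g G u) (v : E) :
    g u + G (v - u) ≤ g v := by
  set φ : ℝ → ℝ := fun t => g (AffineMap.lineMap u v t) with hφdef
  have hconv : ConvexOn ℝ univ φ := by
    have h := hg.comp_affineMap (AffineMap.lineMap u v)
    exact h
  have hrepr : (fun t : ℝ => (AffineMap.lineMap u v : ℝ →ᵃ[ℝ] E) t)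
      = fun t : ℝ => t • (v - u) + u := by
    funext t; rw [AffineMap.lineMap_apply_module]; module
  have hline : HasDerivAt (fun t : ℝ => (AffineMap.lineMap u v : ℝ →ᵃ[ℝ] E) t) (v - u) 0 := by
    rw [hrepr]
    simpa using ((hasDerivAt_id (0:ℝ)).smul_const (v - u)).add_const u
  have hG0 : HasFDerivAt g G ((AffineMap.lineMap u v : ℝ →ᵃ[ℝ] E) 0) := by
    simpa using hG
  have hφderiv : HasDerivAt φ (G (v - u)) 0 := hG0.comp_hasDerivAt 0 hline
  have hs := hconv.le_slope_of_hasDerivAt (mem_univ (0:ℝ)) (mem_univ (1:ℝ)) one_pos hφderiv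
  rw [slope_def_field] at hs
  have h0 : φ 0 = g u := by simp [hφdef]
  have h1 : φ 1 = g v := by simp [hφdef]
  rw [h0, h1] at hs
  have : G (v - u) ≤ g v - g u := by simpa using hs
  linarith

lemma grad_normsq (c : ℝ) (u : E) :
    HasFDerivAt (fun x : E => c / 2 * ‖x‖ ^ 2) (InnerProductSpace.toDual ℝ E (c • u)) u := by
  have h1 : HasFDerivAt (fun x : E => ⟪x, x⟫)
      ((fderivInnerCLM ℝ (u, u)).comp ((ContinuousLinearMap.id ℝ E).prod
        (ContinuousLinearMap.id ℝ E))) u :=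
    (hasFDerivAt_id u).inner ℝ (hasFDerivAt_id u)
  have h2 := h1.const_mul (c / 2)
  have hCLM : (c / 2) • ((fderivInnerCLM ℝ (u, u)).comp ((ContinuousLinearMap.id ℝ E).prod
      (ContinuousLinearMap.id ℝ E))) = InnerProductSpace.toDual ℝ E (c • u) := by
    ext w
    simp only [ContinuousLinearMap.smul_apply, ContinuousLinearMap.coe_comp',
      Function.comp_apply, ContinuousLinearMap.prod_apply, ContinuousLinearMap.coe_id', id_eq,
      fderivInnerCLM_apply, InnerProductSpace.toDual_apply_apply, real_inner_smul_left,
      smul_eq_mul]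
    rw [real_inner_comm w u]; ring
  rw [hCLM] at h2
  have hfun : (fun x : E => c / 2 * ⟪x, x⟫) = fun x : E => c / 2 * ‖x‖ ^ 2 := by
    funext z; rw [real_inner_self_eq_norm_sq]
  rw [hfun] at h2
  exact h2

lemma quad_lower {f : E → ℝ} {f' : E → E} (c : ℝ)
    (hconv : ConvexOn ℝ univ (fun x => f x - c / 2 * ‖x‖ ^ 2))
    (hgrad : ∀ x, HasGradientAt f (f' x) x) (u v : E) :
    f u + ⟪f' u, v - u⟫ + c / 2 * ‖v - u‖ ^ 2 ≤ f v := by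
  have hfd : HasFDerivAt f (InnerProductSpace.toDual ℝ E (f' u)) u := hgrad u
  have hd : HasFDerivAt (fun x => f x - c / 2 * ‖x‖ ^ 2)
      (InnerProductSpace.toDual ℝ E (f' u) - InnerProductSpace.toDual ℝ E (c • u)) u :=
    hfd.sub (grad_normsq c u)
  have h := first_order_aux hconv hd v
  simp only [ContinuousLinearMap.sub_apply, InnerProductSpace.toDual_apply_apply] at h
  have e1 : ‖v - u‖ ^ 2 = ‖v‖ ^ 2 - 2 * ⟪u, v⟫ + ‖u‖ ^ 2 := by
    rw [← real_inner_self_eq_norm_sq, ← real_inner_self_eq_norm_sq,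
      ← real_inner_self_eq_norm_sq]
    simp only [inner_sub_left, inner_sub_right]
    rw [real_inner_comm v u]; ring
  have e2 : ⟪c • u, v - u⟫ = c * (⟪u, v⟫ - ‖u‖ ^ 2) := by
    rw [real_inner_smul_left, inner_sub_right, real_inner_self_eq_norm_sq]
  rw [e2] at h
  rw [e1]
  nlinarith [h]

end helpers

set_option maxHeartbeats 1000000 in
theorem stmt_11 (n : ℕ) (hn : 1 ≤ n)
    (f : EuclideanSpace ℝ (Fin n) → ℝ)
    (f' : EuclideanSpace ℝ (Fin n) → EuclideanSpace ℝ (Fin n))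
    (L μ : ℝ) (hL : 0 < L) (hμ : μ ≤ 0)
    (hgrad : ∀ x, HasGradientAt f (f' x) x)
    (hupper : ConvexOn ℝ univ (fun x => L / 2 * ‖x‖ ^ 2 - f x))
    (hlower : ConvexOn ℝ univ (fun x => f x - μ / 2 * ‖x‖ ^ 2))
    (xs : EuclideanSpace ℝ (Fin n)) (hxs : ∀ z, f xs ≤ f z)
    (X : Set (EuclideanSpace ℝ (Fin n)))
    (μq : ℝ) (hμq : -μ * L / (L - μ) < μq)
    (hQF : ∀ x ∈ X,
      μq / 2 * (Metric.infDist x {y | ∀ z, f y ≤ f z}) ^ 2 ≤ f x - f xs) :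
    ∀ x ∈ X, ∀ xstar ∈ {y | ∀ z, f y ≤ f z},
      ‖x - xstar‖ = Metric.infDist x {y | ∀ z, f y ≤ f z} →
      (μq / 2 * (1 - μ / L) + μ / 2) * ‖x - xstar‖ ^ 2 ≤ ⟪f' x, x - xstar⟫ := by
  intro x hx xstar hxstar hdist
  simp only [Set.mem_setOf_eq] at hxstar
  have hfeq : f xstar = f xs := le_antisymm (hxstar xs) (hxs xstar)
  have hgz : f' xstar = 0 := by
    have hloc : IsLocalMin f xstar :=
      IsMinOn.isLocalMin (fun z _ => hxstar z) Filter.univ_mem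
    have h0 : (InnerProductSpace.toDual ℝ (EuclideanSpace ℝ (Fin n)) (f' xstar)) = 0 :=
      hloc.hasFDerivAt_eq_zero (hgrad xstar)
    exact (InnerProductSpace.toDual ℝ (EuclideanSpace ℝ (Fin n))).map_eq_zero_iff.mp h0
  have lower : ∀ u v, f u + ⟪f' u, v - u⟫ + μ / 2 * ‖v - u‖ ^ 2 ≤ f v :=
    quad_lower μ hlower hgrad
  have upper : ∀ u v, f v ≤ f u + ⟪f' u, v - u⟫ + L / 2 * ‖v - u‖ ^ 2 := by
    intro u v
    have hgradneg : ∀ z, HasGradientAt (fun x => -f x) (-f' z) z := by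
      intro z
      have h1 : HasFDerivAt (fun x => -f x)
          (-(InnerProductSpace.toDual ℝ (EuclideanSpace ℝ (Fin n)) (f' z))) z :=
        (hgrad z : HasFDerivAt f _ z).neg
      rw [← map_neg] at h1
      exact h1
    have hconv' : ConvexOn ℝ univ (fun x => (fun x => -f x) x - (-L) / 2 * ‖x‖ ^ 2) := by
      have heq : (fun x : EuclideanSpace ℝ (Fin n) => (fun x => -f x) x - (-L) / 2 * ‖x‖ ^ 2)
          = fun x => L / 2 * ‖x‖ ^ 2 - f x := by funext z; ring
      rw [heq]; exact hupper
    have h := quad_lower (-L) hconv' hgradneg u v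
    simp only [inner_neg_left] at h
    linarith
  rcases eq_or_lt_of_le (norm_nonneg (x - xstar)) with h0 | hdpos
  · have hzero : x - xstar = 0 := by rw [← norm_eq_zero]; exact h0.symm
    rw [hzero]
    simp
  set d := ‖x - xstar‖ with hd
  set s := ⟪f' x, x - xstar⟫ with hs
  clear_value d s
  have hd2pos : 0 < d ^ 2 := pow_pos hdpos 2
  have hF : μq / 2 * d ^ 2 ≤ f x - f xs := by
    rw [hdist]; exact hQF x hx
  have hFup : f x - f xs ≤ L / 2 * d ^ 2 := by
    have h := upper xstar x
    rw [hgz] at h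
    simp only [inner_zero_left] at h
    rw [hfeq, ← hd] at h
    linarith
  have hqL : μq ≤ L := by nlinarith
  have key : ∀ r, r < μq → (r / 2 * (1 - μ / L) + μ / 2) * d ^ 2 ≤ s := by
    intro r hr
    have hrL : r < L := lt_of_lt_of_le hr hqL
    set α := r / L with hα
    set y := xstar + α • (x - xstar) with hy
    have hyx : y - x = (α - 1) • (x - xstar) := by
      rw [hy, sub_smul, one_smul]; abel
    have hyxs : y - xstar = α • (x - xstar) := by rw [hy]; abel
    clear_value α y
    have h1 := lower x y
    have h2 := upper xstar y
    rw [hyx] at h1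
    rw [hyxs, hgz] at h2
    simp only [inner_zero_left] at h2
    rw [real_inner_smul_right, ← hs] at h1
    have hn1 : ‖(α - 1) • (x - xstar)‖ ^ 2 = (α - 1) ^ 2 * d ^ 2 := by
      rw [norm_smul, mul_pow, Real.norm_eq_abs, sq_abs, ← hd]
    have hn2 : ‖α • (x - xstar)‖ ^ 2 = α ^ 2 * d ^ 2 := by
      rw [norm_smul, mul_pow, Real.norm_eq_abs, sq_abs, ← hd]
    rw [hn1] at h1
    rw [hn2, hfeq] at h2
    have hF' : r / 2 * d ^ 2 ≤ f x - f xs := by nlinarith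
    have hcomb : r / 2 * d ^ 2 + μ / 2 * (1 - α) ^ 2 * d ^ 2 - L / 2 * α ^ 2 * d ^ 2
        ≤ (1 - α) * s := by nlinarith
    have hαpos : 0 < 1 - α := by
      rw [hα, sub_pos]
      exact (div_lt_one hL).mpr hrL
    have hid : (1 - α) * ((r / 2 * (1 - μ / L) + μ / 2) * d ^ 2)
        = r / 2 * d ^ 2 + μ / 2 * (1 - α) ^ 2 * d ^ 2 - L / 2 * α ^ 2 * d ^ 2 := by
      rw [hα]
      field_simp
      ring
    have h3 : (1 - α) * ((r / 2 * (1 - μ / L) + μ / 2) * d ^ 2) ≤ (1 - α) * s := by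
      rw [hid]; exact hcomb
    exact le_of_mul_le_mul_left h3 hαpos
  by_contra hcon
  push_neg at hcon
  have hμL : (0:ℝ) < 1 - μ / L := by
    have : μ / L ≤ 0 := div_nonpos_of_nonpos_of_nonneg hμ hL.le
    linarith
  set c0 := (1 - μ / L) / 2 * d ^ 2 with hc0
  clear_value c0
  have hc0pos : 0 < c0 := by
    rw [hc0]
    exact mul_pos (by linarith) hd2pos
  set δ := (μq / 2 * (1 - μ / L) + μ / 2) * d ^ 2 - s with hδ
  clear_value δ
  have hδpos : 0 < δ := by rw [hδ]; linarith
  have hkey := key (μq - δ / (2 * c0)) (by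
    have : 0 < δ / (2 * c0) := div_pos hδpos (by linarith)
    linarith)
  have hexp : ((μq - δ / (2 * c0)) / 2 * (1 - μ / L) + μ / 2) * d ^ 2
      = (μq / 2 * (1 - μ / L) + μ / 2) * d ^ 2 - δ / (2 * c0) * c0 := by
    rw [hc0]; ring
  have hcancel : δ / (2 * c0) * c0 = δ / 2 := by
    field_simp
  rw [hexp, hcancel] at hkey
  linarith
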